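/- Let H=(V,E) be a 3-uniform hypergraph with all hyperedge weights equal to γ>0 and set y=γ+1, y'=y^{1/2}, γ'=y'-1. Let G be the multigraph on V obtained by replacing each hyperedge {u,v,w} by the three edges {u,v},{v,w},{u,w}, each of weight γ'. Then Z_Tutte(G;2,γ') = (y')^{|E|}·Z_Tutte(H;2,γ). -/

import Mathlib

open scoped Classical

/-- Number of connected components of the subhypergraph `(V, F)`. -/
noncomputable def kappa {V : Type*} [Fintype V] (F : Finset (Finset V)) : ℕ :=
  Nat.card (Quotient (Relation.EqvGen.setoid (fun u v : V => ∃ f ∈ F, u ∈ f ∧ v ∈ f)))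

/-- Number of connected components of the multigraph with edges indexed by `A`. -/
noncomputable def kappaI {V ι : Type*} [Fintype V] (ends : ι → Finset V) (A : Finset ι) : ℕ :=
  Nat.card (Quotient (Relation.EqvGen.setoid
    (fun u v : V => ∃ i ∈ A, u ∈ ends i ∧ v ∈ ends i)))

/-- Index type for the multigraph obtained from a `3`-uniform hypergraph by
replacing each hyperedge by its three constituent pairs. -/
abbrev TriIdx {V : Type*} [DecidableEq V] (E : Finset (Finset V)) :=
  Σ f : {f : Finset V // f ∈ E}, {p : Finset V // p ∈ Finset.powersetCard 2 f.1}

def Mono {V : Type*} (σ : V → Bool) (f : Finset V) : Prop := ∀ u ∈ f, ∀ v ∈ f, σ u = σ v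

noncomputable def cnt {V : Type*} [Fintype V] (p : (V → Bool) → Prop) : ℕ :=
  Nat.card {σ : V → Bool // p σ}

lemma card_respect {V : Type*} [Fintype V] (R : V → V → Prop) :
    cnt (fun σ : V → Bool => ∀ u v, R u v → σ u = σ v)
      = 2 ^ Nat.card (Quotient (Relation.EqvGen.setoid R)) := by
  have e : {σ : V → Bool // ∀ u v, R u v → σ u = σ v} ≃
      (Quotient (Relation.EqvGen.setoid R) → Bool) :=
    { toFun := fun σ => Quotient.lift σ.1 (fun a b h => by
        induction h with
        | rel a b h => exact σ.2 _ _ h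
        | refl => rfl
        | symm _ _ _ ih => exact ih.symm
        | trans _ _ _ _ _ ih1 ih2 => exact ih1.trans ih2)
      invFun := fun g => ⟨fun v => g (Quotient.mk _ v),
        fun u v h => congrArg g (Quotient.sound (Relation.EqvGen.rel _ _ h))⟩
      left_inv := fun σ => rfl
      right_inv := fun g => funext (fun q => Quotient.inductionOn q (fun v => rfl)) }
  rw [cnt, Nat.card_congr e, Nat.card_fun]
  simp

lemma cnt_mul {V : Type*} [Fintype V] (p : (V → Bool) → Prop) (c : ℝ) :
    (cnt p : ℝ) * c = ∑ σ : V → Bool, if p σ then c else 0 := by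
  classical
  rw [cnt, Nat.card_eq_fintype_card, Fintype.card_subtype, ← Finset.sum_filter,
    Finset.sum_const, nsmul_eq_mul]

lemma FK_gen {V ι : Type*} [Fintype V] [DecidableEq ι] (s : Finset ι) (ends : ι → Finset V)
    (w : ℝ) :
    ∑ A ∈ s.powerset,
        (2 : ℝ) ^ (Nat.card (Quotient (Relation.EqvGen.setoid
          (fun u v : V => ∃ i ∈ A, u ∈ ends i ∧ v ∈ ends i)))) * w ^ A.card
      = ∑ σ : V → Bool, ∏ i ∈ s, (1 + if Mono σ (ends i) then w else 0) := by
  have key : ∀ A : Finset ι,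
      (2 : ℝ) ^ (Nat.card (Quotient (Relation.EqvGen.setoid
          (fun u v : V => ∃ i ∈ A, u ∈ ends i ∧ v ∈ ends i))))
        = (cnt (fun σ : V → Bool => ∀ i ∈ A, Mono σ (ends i)) : ℝ) := by
    intro A
    have hiff : ∀ σ : V → Bool,
        (∀ u v, (∃ i ∈ A, u ∈ ends i ∧ v ∈ ends i) → σ u = σ v) ↔
          (∀ i ∈ A, Mono σ (ends i)) := by
      intro σ
      constructor
      · intro h i hi u hu v hv
        exact h u v ⟨i, hi, hu, hv⟩
      · intro h u v huv
        obtain ⟨i, hi, hu, hv⟩ := huv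
        exact h i hi u hu v hv
    have hc : cnt (fun σ : V → Bool => ∀ i ∈ A, Mono σ (ends i))
        = cnt (fun σ : V → Bool => ∀ u v, (∃ i ∈ A, u ∈ ends i ∧ v ∈ ends i) → σ u = σ v) :=
      Nat.card_congr (Equiv.subtypeEquivRight (fun σ => (hiff σ).symm))
    rw [hc, card_respect]
    push_cast
    ring
  calc ∑ A ∈ s.powerset,
        (2 : ℝ) ^ (Nat.card (Quotient (Relation.EqvGen.setoid
          (fun u v : V => ∃ i ∈ A, u ∈ ends i ∧ v ∈ ends i)))) * w ^ A.card
      = ∑ A ∈ s.powerset, ∑ σ : V → Bool,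
          (if ∀ i ∈ A, Mono σ (ends i) then w ^ A.card else 0) := by
        refine Finset.sum_congr rfl (fun A _ => ?_)
        rw [key A, cnt_mul]
        refine Finset.sum_congr rfl (fun σ _ => ?_)
        by_cases h : ∀ i ∈ A, Mono σ (ends i) <;> simp [h]
    _ = ∑ σ : V → Bool, ∑ A ∈ s.powerset,
          (if ∀ i ∈ A, Mono σ (ends i) then w ^ A.card else 0) := Finset.sum_comm
    _ = ∑ σ : V → Bool, ∏ i ∈ s, (1 + if Mono σ (ends i) then w else 0) := by
        refine Finset.sum_congr rfl (fun σ _ => ?_)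
        rw [← Finset.sum_filter]
        have hps : s.powerset.filter (fun A => ∀ i ∈ A, Mono σ (ends i))
            = (s.filter (fun i => Mono σ (ends i))).powerset := by
          ext A
          simp only [Finset.mem_filter, Finset.mem_powerset, Finset.subset_iff]
          constructor
          · rintro ⟨h1, h2⟩ i hi
            exact ⟨h1 hi, h2 i hi⟩
          · intro h
            exact ⟨fun a hi => (h hi).1, fun i hi => (h hi).2⟩
        rw [hps]
        have hprod := Finset.prod_add (fun _ : ι => w) (fun _ : ι => (1:ℝ))
          (s.filter (fun i => Mono σ (ends i)))
        simp only [Finset.prod_const, Finset.prod_const_one, mul_one, one_pow] at hprod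
        have hl : (∏ i ∈ s, (1 + if Mono σ (ends i) then w else 0))
            = ∏ i ∈ s.filter (fun i => Mono σ (ends i)), (w + 1) := by
          rw [Finset.prod_filter]
          refine Finset.prod_congr rfl (fun i _ => ?_)
          by_cases h : Mono σ (ends i) <;> simp [h, add_comm]
        rw [hl, Finset.prod_const]
        exact hprod.symm
lemma mono_pair {V : Type*} [DecidableEq V] (σ : V → Bool) (u v : V) :
    Mono σ ({u, v} : Finset V) ↔ σ u = σ v := by
  constructor
  · intro h; exact h u (by simp) v (by simp)
  · intro h x hx y hy
    simp only [Finset.mem_insert, Finset.mem_singleton] at hx hy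
    rcases hx with rfl|rfl <;> rcases hy with rfl|rfl <;> grind

lemma mono_triple {V : Type*} [DecidableEq V] (σ : V → Bool) (a b c : V) :
    Mono σ ({a, b, c} : Finset V) ↔ σ a = σ b ∧ σ a = σ c := by
  constructor
  · intro h; exact ⟨h a (by simp) b (by simp), h a (by simp) c (by simp)⟩
  · rintro ⟨h1, h2⟩ x hx y hy
    simp only [Finset.mem_insert, Finset.mem_singleton] at hx hy
    rcases hx with rfl|rfl|rfl <;> rcases hy with rfl|rfl|rfl <;> grind

lemma pcard2 {V : Type*} [DecidableEq V] (a b c : V) (hab : a ≠ b) (hac : a ≠ c) (hbc : b ≠ c) :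
    Finset.powersetCard 2 ({a,b,c} : Finset V) = {{a,b},{a,c},{b,c}} := by
  ext p
  simp only [Finset.mem_powersetCard, Finset.mem_insert, Finset.mem_singleton]
  constructor
  · rintro ⟨hsub, hcard⟩
    obtain ⟨x, y, hxy, rfl⟩ := Finset.card_eq_two.mp hcard
    have hx : x ∈ ({a,b,c} : Finset V) := hsub (by simp)
    have hy : y ∈ ({a,b,c} : Finset V) := hsub (by simp)
    simp only [Finset.mem_insert, Finset.mem_singleton] at hx hy
    rcases hx with rfl|rfl|rfl <;> rcases hy with rfl|rfl|rfl <;>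
      simp_all [Finset.pair_comm]
  · rintro (rfl|rfl|rfl) <;>
      refine ⟨by simp [Finset.insert_subset_iff], Finset.card_pair (by assumption)⟩

lemma tri_prod {V : Type*} [DecidableEq V] (f : Finset V) (hf : f.card = 3) (σ : V → Bool)
    (γ : ℝ) (hγ : 0 < γ) :
    ∏ p ∈ Finset.powersetCard 2 f, (1 + if Mono σ p then Real.sqrt (γ+1) - 1 else 0)
      = Real.sqrt (γ+1) * (1 + if Mono σ f then γ else 0) := by
  obtain ⟨a, b, c, hab, hac, hbc, rfl⟩ := Finset.card_eq_three.mp hf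
  rw [pcard2 a b c hab hac hbc]
  have h1 : ({a,b} : Finset V) ≠ {a,c} := by
    intro h
    have : b ∈ ({a,c} : Finset V) := h ▸ (by simp)
    simp only [Finset.mem_insert, Finset.mem_singleton] at this
    rcases this with rfl|rfl
    · exact hab rfl
    · exact hbc rfl
  have h2 : ({a,b} : Finset V) ≠ {b,c} := by
    intro h
    have : a ∈ ({b,c} : Finset V) := h ▸ (by simp)
    simp only [Finset.mem_insert, Finset.mem_singleton] at this
    rcases this with rfl|rfl
    · exact hab rfl
    · exact hac rfl
  have h3 : ({a,c} : Finset V) ≠ {b,c} := by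
    intro h
    have : a ∈ ({b,c} : Finset V) := h ▸ (by simp)
    simp only [Finset.mem_insert, Finset.mem_singleton] at this
    rcases this with rfl|rfl
    · exact hab rfl
    · exact hac rfl
  rw [show ({{a,b},{a,c},{b,c}} : Finset (Finset V)) = insert {a,b} {{a,c},{b,c}} from rfl,
    Finset.prod_insert (by simp [h1, h2]),
    show ({{a,c},{b,c}} : Finset (Finset V)) = insert {a,c} {{b,c}} from rfl,
    Finset.prod_insert (by simp [h3]), Finset.prod_singleton]
  have hy : Real.sqrt (γ+1) ^ 2 = γ + 1 := Real.sq_sqrt (by linarith)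
  simp only [mono_pair, mono_triple]
  cases ha : σ a <;> cases hb : σ b <;> cases hc : σ c <;> simp_all
  all_goals (left; nlinarith [hy])

theorem three_uniform_to_graph {V : Type*} [Fintype V] [DecidableEq V]
    (E : Finset (Finset V)) (h3 : ∀ f ∈ E, f.card = 3) (γ : ℝ) (hγ : 0 < γ) :
    let γ' : ℝ := Real.sqrt (γ + 1) - 1
    let ends : TriIdx E → Finset V := fun e => e.2.1
    (∑ A ∈ (Finset.univ : Finset (TriIdx E)).powerset,
        (2 : ℝ) ^ kappaI ends A * γ' ^ A.card)
      = Real.sqrt (γ + 1) ^ E.card *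
          ∑ F ∈ E.powerset, (2 : ℝ) ^ kappa F * γ ^ F.card := by
  intro γ' ends
  have hL := FK_gen (Finset.univ : Finset (TriIdx E)) ends γ'
  have hR := FK_gen E (fun f => f) γ
  simp only [kappaI]
  rw [hL]
  simp only [kappa]
  rw [hR]
  have hmid : ∀ σ : V → Bool,
      (∏ i ∈ (Finset.univ : Finset (TriIdx E)), (1 + if Mono σ (ends i) then γ' else 0))
        = Real.sqrt (γ + 1) ^ E.card * ∏ f ∈ E, (1 + if Mono σ f then γ else 0) := by
    intro σ
    rw [← Finset.univ_sigma_univ, Finset.prod_sigma]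
    have step1 : ∀ f : {f : Finset V // f ∈ E},
        (∏ p ∈ (Finset.univ : Finset {p : Finset V // p ∈ Finset.powersetCard 2 f.1}),
            (1 + if Mono σ (ends ⟨f, p⟩) then γ' else 0))
          = Real.sqrt (γ + 1) * (1 + if Mono σ f.1 then γ else 0) := by
      intro f
      have : (∏ p ∈ (Finset.univ : Finset {p : Finset V // p ∈ Finset.powersetCard 2 f.1}),
          (1 + if Mono σ p.1 then γ' else 0))
          = ∏ p ∈ Finset.powersetCard 2 f.1, (1 + if Mono σ p then γ' else 0) :=
        (Finset.prod_subtype (Finset.powersetCard 2 f.1) (fun x => Iff.rfl)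
          (fun p => 1 + if Mono σ p then γ' else 0)).symm
      rw [show (fun p => (1 + if Mono σ (ends ⟨f, p⟩) then γ' else 0))
          = fun p : {p : Finset V // p ∈ Finset.powersetCard 2 f.1} =>
            (1 + if Mono σ p.1 then γ' else 0) from rfl, this]
      exact tri_prod f.1 (h3 f.1 f.2) σ γ hγ
    rw [Finset.prod_congr rfl (fun f _ => step1 f)]
    rw [Finset.prod_mul_distrib, Finset.prod_const]
    have hcard : Fintype.card {f : Finset V // f ∈ E} = E.card := Fintype.card_coe E
    rw [Finset.card_univ, hcard]
    congr 1
    exact (Finset.prod_subtype E (fun x => Iff.rfl)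
      (fun f => 1 + if Mono σ f then γ else 0)).symm
  rw [Finset.sum_congr rfl (fun σ _ => hmid σ), ← Finset.mul_sum]
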